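/- Let C be a triangulated category, n ≥ 1, and 𝒟 a functorially finite (n+1)-rigid subcategory satisfying ⋂_{k=1}^{n} {}^{⊥_k}𝒟 = ⋂_{k=1}^{n} 𝒟^{⊥_k}; denote this common subcategory by Z. Let X, Y ∈ Z, set Y⟨0⟩ := Y, and suppose given distinguished triangles Y⟨i−1⟩ →f_i D_i →g_i Y⟨i⟩ → ΣY⟨i−1⟩ for i = 1, …, n, where D_i ∈ 𝒟, f_i is a left 𝒟-approximation of Y⟨i−1⟩ and g_i is a right 𝒟-approximation of Y⟨i⟩. Then for every 1 ≤ i ≤ n there is an isomorphism of abelian groups Hom(X, Y⟨i⟩)/[𝒟](X, Y⟨i⟩) ≅ Hom(X, Σ^i Y). -/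

import Mathlib

open CategoryTheory Category Limits Pretriangulated ZeroObject

variable {C : Type*} [Category C] [Preadditive C] [HasZeroObject C]
  [HasShift C ℤ] [∀ n : ℤ, (shiftFunctor C n).Additive] [Pretriangulated C]
  [IsTriangulated C]

/-- `f : A ⟶ B` is a right `X`-approximation of `B`. -/
def IsRightApprox (X : Set C) {A B : C} (f : A ⟶ B) : Prop :=
  A ∈ X ∧ ∀ A' : C, A' ∈ X → ∀ g : A' ⟶ B, ∃ h : A' ⟶ A, h ≫ f = g

/-- `f : A ⟶ B` is a left `X`-approximation of `A`. -/
def IsLeftApprox (X : Set C) {A B : C} (f : A ⟶ B) : Prop :=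
  B ∈ X ∧ ∀ B' : C, B' ∈ X → ∀ g : A ⟶ B', ∃ h : B ⟶ B', f ≫ h = g

/-- `X` is contravariantly finite: every object admits a right `X`-approximation. -/
def ContravariantlyFinite (X : Set C) : Prop :=
  ∀ Z : C, ∃ (A : C) (f : A ⟶ Z), IsRightApprox X f

/-- `X` is covariantly finite: every object admits a left `X`-approximation. -/
def CovariantlyFinite (X : Set C) : Prop :=
  ∀ Z : C, ∃ (B : C) (f : Z ⟶ B), IsLeftApprox X f

/-- `D` is `(n+1)`-rigid: `Hom(D, Σ^k D') = 0` for all `D, D' ∈ D` and `1 ≤ k ≤ n`. -/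
def IsRigid (n : ℕ) (D : Set C) : Prop :=
  ∀ d ∈ D, ∀ d' ∈ D, ∀ k : ℕ, 1 ≤ k → k ≤ n → ∀ f : d ⟶ d'⟦(k : ℤ)⟧, f = 0

/-- `⋂_{k=1}^{n} {}^{⊥_k} D`. -/
def leftPerpInter (D : Set C) (n : ℕ) : Set C :=
  {M : C | ∀ k : ℕ, 1 ≤ k → k ≤ n → ∀ d ∈ D, ∀ f : M ⟶ d⟦(k : ℤ)⟧, f = 0}

/-- `⋂_{k=1}^{n} D^{⊥_k}`. -/
def rightPerpInter (D : Set C) (n : ℕ) : Set C :=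
  {N : C | ∀ k : ℕ, 1 ≤ k → k ≤ n → ∀ d ∈ D, ∀ f : d ⟶ N⟦(k : ℤ)⟧, f = 0}


/-- Iterated isomorphisms `Hom(X, Y⟨j⟩⟦k⟧) ≅ Hom(X, Y⟨0⟩⟦j+k⟧)`. -/
lemma auxL (n : ℕ) (D : Set C) (X : C) (hX : X ∈ leftPerpInter D n)
    (Yb Db : ℕ → C) (f : ∀ i, Yb i ⟶ Db i) (g : ∀ i, Db i ⟶ Yb (i+1))
    (h : ∀ i, Yb (i+1) ⟶ (Yb i)⟦(1:ℤ)⟧)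
    (hDb : ∀ i < n, Db i ∈ D)
    (htri : ∀ i < n, Triangle.mk (f i) (g i) (h i) ∈ distTriang C) :
    ∀ j k : ℕ, 1 ≤ k → j + k ≤ n →
      Nonempty ((X ⟶ (Yb j)⟦(k:ℤ)⟧) ≃+ (X ⟶ (Yb 0)⟦((j + k : ℕ):ℤ)⟧)) := by
  intro j
  induction j with
  | zero =>
    intro k hk1 hkn
    rw [Nat.zero_add]
    exact ⟨AddEquiv.refl _⟩
  | succ j ih =>
    intro k hk1 hkn
    have hjn : j < n := by omega
    set T := Triangle.mk (f j) (g j) (h j) with hTdef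
    have hT := htri j hjn
    set ST := (CategoryTheory.shiftFunctor (Triangle C) (k:ℤ)).obj T with hSTdef
    have hST : ST ∈ distTriang C := Triangle.shift_distinguished T hT (k:ℤ)
    have hcast : (k:ℤ) + 1 = ((k+1 : ℕ):ℤ) := by push_cast; ring
    let ι : (shiftFunctor C (1:ℤ)).obj ((shiftFunctor C (k:ℤ)).obj (Yb j)) ⟶
        (Yb j)⟦((k+1:ℕ):ℤ)⟧ :=
      (shiftFunctorAdd' C (k:ℤ) 1 ((k+1:ℕ):ℤ) hcast).inv.app (Yb j)
    have hι : IsIso ι := inferInstance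
    have zero1 : ∀ (w : X ⟶ (Db j)⟦(k:ℤ)⟧), w = 0 :=
      fun w => hX k hk1 (by omega) _ (hDb j hjn) w
    have zero2 : ∀ (w : X ⟶ (shiftFunctor C (1:ℤ)).obj
        ((shiftFunctor C (k:ℤ)).obj (Db j))), w = 0 := by
      intro w
      have hw : w ≫ (shiftFunctorAdd' C (k:ℤ) 1 ((k+1:ℕ):ℤ) hcast).inv.app (Db j) = 0 :=
        hX (k+1) (by omega) (by omega) _ (hDb j hjn) _
      rwa [Preadditive.IsIso.comp_right_eq_zero] at hw
    let m : (Yb (j+1))⟦(k:ℤ)⟧ ⟶ (Yb j)⟦((k+1:ℕ):ℤ)⟧ := ST.mor₃ ≫ ι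
    let β : (X ⟶ (Yb (j+1))⟦(k:ℤ)⟧) →+ (X ⟶ (Yb j)⟦((k+1:ℕ):ℤ)⟧) :=
      AddMonoidHom.mk' (fun u => u ≫ m) (fun u v => Preadditive.add_comp _ _ _ _ _ _)
    have hinj : Function.Injective β := by
      rw [injective_iff_map_eq_zero]
      intro u hu
      have hu' : u ≫ ST.mor₃ = 0 := by
        have h0 : (u ≫ ST.mor₃) ≫ ι = 0 := by
          exact (assoc _ _ _).trans hu
        exact (cancel_mono ι).1 (h0.trans zero_comp.symm)
      obtain ⟨w, hw⟩ := Triangle.coyoneda_exact₃ ST hST u hu'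
      have hw0 : w = 0 := zero1 w
      rw [hw, hw0, zero_comp]
      exact rfl
    have hsurj : Function.Surjective β := by
      intro v
      let v' : X ⟶ ST.obj₁⟦(1:ℤ)⟧ :=
        v ≫ (shiftFunctorAdd' C (k:ℤ) 1 ((k+1:ℕ):ℤ) hcast).hom.app (Yb j)
      obtain ⟨u, hu⟩ := Triangle.coyoneda_exact₁ ST hST v' (zero2 _)
      refine ⟨u, ?_⟩
      show u ≫ m = v
      have huu : u ≫ m = (u ≫ ST.mor₃) ≫ ι := (assoc _ _ _).symm
      rw [huu, ← hu]
      exact (assoc _ _ _).trans ((v ≫= Iso.hom_inv_id_app (shiftFunctorAdd' C (k:ℤ) 1 ((k+1:ℕ):ℤ) hcast) (Yb j)).trans (comp_id v))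
    obtain ⟨e'⟩ := ih (k+1) (by omega) (by omega)
    have hre : j + (k+1) = (j+1) + k := by omega
    rw [hre] at e'
    exact ⟨(AddEquiv.ofBijective β ⟨hinj, hsurj⟩).trans e'⟩

/-- for `X, Y ∈ Z` and a chain of distinguished triangles
`Y⟨i-1⟩ ⟶ Dᵢ ⟶ Y⟨i⟩ ⟶ ΣY⟨i-1⟩` realizing the shifts in the subfactor category
`Z/D`, there is an isomorphism `Hom(X, Y⟨i⟩)/[D](X, Y⟨i⟩) ≅ Hom(X, Σ^i Y)` for
`1 ≤ i ≤ n`, expressed as a surjective additive map whose kernel is `[D](X, Y⟨i⟩)`. -/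
theorem stmt5 (n : ℕ) (hn : 1 ≤ n) (D : Set C)
    (hcontra : ContravariantlyFinite D) (hcov : CovariantlyFinite D)
    (hrigid : IsRigid n D)
    (hZ : leftPerpInter D n = rightPerpInter D n)
    (X : C) (hX : X ∈ leftPerpInter D n)
    (Yb : ℕ → C) (hY : Yb 0 ∈ leftPerpInter D n)
    (Db : ℕ → C) (f : ∀ i : ℕ, Yb i ⟶ Db i) (g : ∀ i : ℕ, Db i ⟶ Yb (i + 1))
    (h : ∀ i : ℕ, Yb (i + 1) ⟶ (Yb i)⟦(1 : ℤ)⟧)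
    (hDb : ∀ i < n, Db i ∈ D)
    (htri : ∀ i < n, Triangle.mk (f i) (g i) (h i) ∈ distTriang C)
    (hf : ∀ i < n, IsLeftApprox D (f i))
    (hg : ∀ i < n, IsRightApprox D (g i)) :
    ∀ i : ℕ, 1 ≤ i → i ≤ n →
      ∃ φ : (X ⟶ Yb i) →+ (X ⟶ (Yb 0)⟦(i : ℤ)⟧),
        Function.Surjective φ ∧
        ∀ u : X ⟶ Yb i,
          φ u = 0 ↔ ∃ (d : C) (_ : d ∈ D) (a : X ⟶ d) (b : d ⟶ Yb i), a ≫ b = u := by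
  intro i hi1 hin
  obtain ⟨i', rfl⟩ : ∃ i', i = i' + 1 := ⟨i - 1, by omega⟩
  have hi'n : i' < n := by omega
  set T := Triangle.mk (f i') (g i') (h i') with hTdef
  have hT := htri i' hi'n
  let α : (X ⟶ Yb (i'+1)) →+ (X ⟶ (Yb i')⟦(1:ℤ)⟧) :=
    AddMonoidHom.mk' (fun u => u ≫ h i') (fun u v => Preadditive.add_comp _ _ _ _ _ _)
  have hαsurj : Function.Surjective α := by
    intro v
    have hv : v ≫ T.mor₁⟦(1:ℤ)⟧' = 0 := by
      have hz : ∀ w : X ⟶ (Db i')⟦((1:ℕ):ℤ)⟧, w = 0 := hX 1 le_rfl hn _ (hDb i' hi'n)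
      exact hz _
    obtain ⟨u, hu⟩ := Triangle.coyoneda_exact₁ T hT v hv
    exact ⟨u, hu.symm⟩
  have hαker : ∀ u : X ⟶ Yb (i'+1),
      α u = 0 ↔ ∃ (d : C) (_ : d ∈ D) (a : X ⟶ d) (b : d ⟶ Yb (i'+1)), a ≫ b = u := by
    intro u
    constructor
    · intro hu
      obtain ⟨w, hw⟩ := Triangle.coyoneda_exact₃ T hT u hu
      exact ⟨Db i', hDb i' hi'n, w, g i', hw.symm⟩
    · rintro ⟨d, hd, a, b, rfl⟩
      obtain ⟨c, hc⟩ := (hg i' hi'n).2 d hd b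
      show (a ≫ b) ≫ h i' = 0
      have hgh : g i' ≫ h i' = 0 := comp_distTriang_mor_zero₂₃ T hT
      rw [← hc, assoc, assoc, hgh, comp_zero, comp_zero]
  obtain ⟨e⟩ := auxL n D X hX Yb Db f g h hDb htri i' 1 le_rfl (by omega)
  refine ⟨e.toAddMonoidHom.comp α, ?_, ?_⟩
  · intro v
    obtain ⟨w, hw⟩ := e.surjective v
    obtain ⟨u, hu⟩ := hαsurj w
    exact ⟨u, by rw [show (e.toAddMonoidHom.comp α) u = e (α u) from rfl, hu, hw]⟩
  · intro u
    have h1 : (e.toAddMonoidHom.comp α) u = e (α u) := rfl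
    rw [h1, EmbeddingLike.map_eq_zero_iff]
    exact hαker u
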